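/- Let f : ℝ → ℝ be a differentiable function that attains both a positive and a negative value on every nonempty open interval. Then every point at which the derivative f' is continuous satisfies f'(x) = 0; that is, the set S of continuity points of f' is contained in N = {x ∈ ℝ : f'(x) = 0}. -/
import Mathlib


/-- If `f : ℝ → ℝ` is differentiable and attains both a positive and a negative value
on every nonempty open interval, then `f'` vanishes at every point where it is
continuous. -/
theorem stmt_9 (f : ℝ → ℝ) (hf : Differentiable ℝ f)
    (hnm : ∀ x y : ℝ, x < y →
      (∃ z ∈ Set.Ioo x y, 0 < f z) ∧ (∃ z ∈ Set.Ioo x y, f z < 0)) :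
    {x : ℝ | ContinuousAt (deriv f) x} ⊆ {x : ℝ | deriv f x = 0} := by
  intro x hx
  simp only [Set.mem_setOf_eq] at hx ⊢
  by_contra hne
  set c := deriv f x with hcdef
  have hc2 : 0 < |c| / 2 := by positivity
  have hmem := hx (Metric.ball_mem_nhds c hc2)
  rw [Filter.mem_map, Metric.mem_nhds_iff] at hmem
  obtain ⟨δ, hδ, hball⟩ := hmem
  have hsub : Metric.ball x δ = Set.Ioo (x - δ) (x + δ) := Real.ball_eq_Ioo x δ
  have key : ∀ y ∈ Set.Ioo (x - δ) (x + δ), |deriv f y - c| < |c| / 2 := by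
    intro y hy
    have := hball (by rw [hsub]; exact hy)
    rwa [Set.mem_preimage, Metric.mem_ball, Real.dist_eq] at this
  rcases lt_or_gt_of_ne hne with hneg | hpos
  · have hderiv : ∀ y ∈ Set.Ioo (x - δ) (x + δ), deriv f y < 0 := by
      intro y hy
      have h1 := key y hy
      rw [abs_of_neg hneg] at h1
      rcases abs_lt.mp h1 with ⟨_, h3⟩
      linarith
    have hanti : StrictAntiOn f (Set.Ioo (x - δ) (x + δ)) :=
      strictAntiOn_of_deriv_neg (convex_Ioo _ _) hf.continuous.continuousOn
        (by rwa [interior_Ioo])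
    obtain ⟨_, z1, hz1, hz1neg⟩ := hnm (x - δ) x (by linarith)
    obtain ⟨⟨z2, hz2, hz2pos⟩, _⟩ := hnm z1 (x + δ) (by rcases hz1 with ⟨_, h⟩; linarith)
    have hz1m : z1 ∈ Set.Ioo (x - δ) (x + δ) := ⟨hz1.1, by linarith [hz1.2]⟩
    have hz2m : z2 ∈ Set.Ioo (x - δ) (x + δ) := ⟨by linarith [hz1.1, hz2.1], hz2.2⟩
    have := hanti hz1m hz2m hz2.1
    linarith
  · have hderiv : ∀ y ∈ Set.Ioo (x - δ) (x + δ), 0 < deriv f y := by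
      intro y hy
      have h1 := key y hy
      rw [abs_of_pos hpos] at h1
      rcases abs_lt.mp h1 with ⟨h2, _⟩
      linarith
    have hmono : StrictMonoOn f (Set.Ioo (x - δ) (x + δ)) :=
      strictMonoOn_of_deriv_pos (convex_Ioo _ _) hf.continuous.continuousOn
        (by rwa [interior_Ioo])
    obtain ⟨⟨z1, hz1, hz1pos⟩, _⟩ := hnm (x - δ) x (by linarith)
    obtain ⟨_, z2, hz2, hz2neg⟩ := hnm z1 (x + δ) (by rcases hz1 with ⟨_, h⟩; linarith)
    have hz1m : z1 ∈ Set.Ioo (x - δ) (x + δ) := ⟨hz1.1, by linarith [hz1.2]⟩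
    have hz2m : z2 ∈ Set.Ioo (x - δ) (x + δ) := ⟨by linarith [hz1.1, hz2.1], hz2.2⟩
    have := hmono hz1m hz2m hz2.1
    linarith
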